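/- arXiv:1611.01390 — 2 statements merged into one kernel-verified Lean document; each statement's English description precedes it below -/
import Mathlib

section
/- Let F : (0,∞) → ℝ be defined by F(v) = (2 − v²)/(π(1+v²)²) − v²(v²+4)·(ln v − ln(√(v²+1)+1))/(π(v²+1)^{5/2}). Then v⁴·F(v) converges to 16/(3π) as v → ∞; in particular F(v) decays like a constant times v⁻⁴ at infinity. -/
open Real

/-- The closed-form inverse cone-projection transform `L⁻¹(h)`. -/
noncomputable def Finv (v : ℝ) : ℝ :=
  (2 - v ^ 2) / (π * (1 + v ^ 2) ^ 2) -
    v ^ 2 * (v ^ 2 + 4) * (Real.log v - Real.log (Real.sqrt (v ^ 2 + 1) + 1)) /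
      (π * (v ^ 2 + 1) ^ ((5 : ℝ) / 2))

lemma my_sqrt_ub (x : ℝ) (hx : 0 ≤ x) : Real.sqrt (1 + x) ≤ 1 + x / 2 := by
  have h : Real.sqrt (1 + x) ≤ Real.sqrt ((1 + x / 2) ^ 2) :=
    Real.sqrt_le_sqrt (by nlinarith)
  rwa [Real.sqrt_sq (by linarith)] at h

lemma my_sqrt_lb (x : ℝ) (hx : 0 ≤ x) (hx1 : x ≤ 1) :
    1 + x / 2 - x ^ 2 / 8 ≤ Real.sqrt (1 + x) := by
  rw [Real.le_sqrt (by nlinarith) (by linarith)]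
  nlinarith [pow_le_pow_of_le_one hx hx1 (show 3 ≤ 4 by norm_num)]

lemma arsinh_deriv_lb (x : ℝ) : 1 - x ^ 2 / 2 ≤ (Real.sqrt (1 + x ^ 2))⁻¹ := by
  have hs : 0 < Real.sqrt (1 + x ^ 2) := Real.sqrt_pos.2 (by positivity)
  rcases le_or_gt (1 - x ^ 2 / 2) 0 with h | h
  · exact h.trans (by positivity)
  · rw [inv_eq_one_div, le_div_iff₀ hs]
    have hub := my_sqrt_ub (x ^ 2) (sq_nonneg x)
    nlinarith [mul_le_mul_of_nonneg_left hub h.le]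

lemma arsinh_deriv_ub (x : ℝ) (h0 : 0 ≤ x) (h1 : x ≤ 1) :
    (Real.sqrt (1 + x ^ 2))⁻¹ ≤ 1 - x ^ 2 / 2 + 5 * x ^ 4 / 8 := by
  have hs : 0 < Real.sqrt (1 + x ^ 2) := Real.sqrt_pos.2 (by positivity)
  have hlb := my_sqrt_lb (x ^ 2) (sq_nonneg x) (by nlinarith)
  have hx2 : x ^ 2 ≤ 1 := by nlinarith
  have hx4 : (x ^ 2) ^ 2 ≤ 1 := by nlinarith [sq_nonneg x]
  have hlbpos : (0:ℝ) < 1 + x ^ 2 / 2 - (x ^ 2) ^ 2 / 8 := by nlinarith [sq_nonneg x]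
  rw [inv_eq_one_div, div_le_iff₀ hs]
  have key : (1:ℝ) ≤ (1 - x ^ 2 / 2 + 5 * x ^ 4 / 8) * (1 + x ^ 2 / 2 - (x ^ 2) ^ 2 / 8) := by
    nlinarith [pow_le_pow_of_le_one h0 h1 (show 4 ≤ 6 by norm_num),
      pow_le_pow_of_le_one h0 h1 (show 4 ≤ 8 by norm_num), sq_nonneg x]
  have hcoef : (0:ℝ) ≤ 1 - x ^ 2 / 2 + 5 * x ^ 4 / 8 := by nlinarith
  calc (1:ℝ) ≤ (1 - x ^ 2 / 2 + 5 * x ^ 4 / 8) * (1 + x ^ 2 / 2 - (x ^ 2) ^ 2 / 8) := key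
    _ ≤ (1 - x ^ 2 / 2 + 5 * x ^ 4 / 8) * Real.sqrt (1 + x ^ 2) :=
        mul_le_mul_of_nonneg_left hlb hcoef

lemma my_arsinh_lb (t : ℝ) (h0 : 0 ≤ t) (h1 : t ≤ 1) :
    t - t ^ 3 / 6 ≤ Real.arsinh t := by
  have key : MonotoneOn (fun x : ℝ => Real.arsinh x - (x - x ^ 3 / 6)) (Set.Icc 0 1) := by
    apply monotoneOn_of_hasDerivWithinAt_nonneg (convex_Icc 0 1)
      (f' := fun x => (Real.sqrt (1 + x ^ 2))⁻¹ - (1 - x ^ 2 / 2))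
    · exact (Real.continuous_arsinh.sub (by continuity)).continuousOn
    · intro x hx
      have hp : HasDerivAt (fun x : ℝ => x - x ^ 3 / 6) (1 - x ^ 2 / 2) x := by
        have := (hasDerivAt_id x).sub ((hasDerivAt_pow 3 x).div_const 6)
        exact this.congr_deriv (by push_cast; ring)
      exact ((Real.hasDerivAt_arsinh x).sub hp).hasDerivWithinAt
    · intro x hx
      exact sub_nonneg.2 (arsinh_deriv_lb x)
  have h := key (Set.mem_Icc.2 ⟨le_refl 0, zero_le_one⟩) (Set.mem_Icc.2 ⟨h0, h1⟩) h0
  simp only [Real.arsinh_zero] at h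
  norm_num at h
  linarith

lemma my_arsinh_ub (t : ℝ) (h0 : 0 ≤ t) (h1 : t ≤ 1) :
    Real.arsinh t ≤ t - t ^ 3 / 6 + t ^ 5 / 8 := by
  have key : MonotoneOn (fun x : ℝ => (x - x ^ 3 / 6 + x ^ 5 / 8) - Real.arsinh x)
      (Set.Icc 0 1) := by
    apply monotoneOn_of_hasDerivWithinAt_nonneg (convex_Icc 0 1)
      (f' := fun x => (1 - x ^ 2 / 2 + 5 * x ^ 4 / 8) - (Real.sqrt (1 + x ^ 2))⁻¹)
    · exact ((by continuity : Continuous fun x : ℝ => x - x ^ 3 / 6 + x ^ 5 / 8).sub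
        Real.continuous_arsinh).continuousOn
    · intro x hx
      have hp : HasDerivAt (fun x : ℝ => x - x ^ 3 / 6 + x ^ 5 / 8)
          (1 - x ^ 2 / 2 + 5 * x ^ 4 / 8) x := by
        have := ((hasDerivAt_id x).sub ((hasDerivAt_pow 3 x).div_const 6)).add
          ((hasDerivAt_pow 5 x).div_const 8)
        exact this.congr_deriv (by push_cast; ring)
      exact (hp.sub (Real.hasDerivAt_arsinh x)).hasDerivWithinAt
    · intro x hx
      rw [interior_Icc] at hx
      exact sub_nonneg.2 (arsinh_deriv_ub x hx.1.le hx.2.le)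
  have h := key (Set.mem_Icc.2 ⟨le_refl 0, zero_le_one⟩) (Set.mem_Icc.2 ⟨h0, h1⟩) h0
  simp only [Real.arsinh_zero] at h
  norm_num at h
  linarith

noncomputable def gfun (t : ℝ) : ℝ :=
  (2 * t ^ 2 - 1) / (t ^ 2 * (t ^ 2 + 1) ^ 2) +
    (1 + 4 * t ^ 2) * Real.arsinh t / (t ^ 3 * (t ^ 2 + 1) ^ 2 * Real.sqrt (t ^ 2 + 1))

lemma key_id (v : ℝ) (hv : 1 ≤ v) : v ^ 4 * Finv v = gfun (1 / v) / π := by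
  have hv0 : 0 < v := lt_of_lt_of_le one_pos hv
  have hpos : (0:ℝ) < v ^ 2 + 1 := by positivity
  have hS : 0 < Real.sqrt (v ^ 2 + 1) := Real.sqrt_pos.2 hpos
  -- sqrt of (1/v)^2+1
  have hsq : Real.sqrt ((1 / v) ^ 2 + 1) = Real.sqrt (v ^ 2 + 1) / v := by
    rw [show (1 / v) ^ 2 + 1 = (v ^ 2 + 1) / v ^ 2 by field_simp; ring,
      Real.sqrt_div hpos.le, Real.sqrt_sq hv0.le]
  -- log identity
  have hlog : Real.log v - Real.log (Real.sqrt (v ^ 2 + 1) + 1) = - Real.arsinh (1 / v) := by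
    rw [Real.arsinh]
    rw [show (1:ℝ) + (1 / v) ^ 2 = (1 / v) ^ 2 + 1 by ring, hsq,
      show 1 / v + Real.sqrt (v ^ 2 + 1) / v = (Real.sqrt (v ^ 2 + 1) + 1) / v by ring,
      Real.log_div (by positivity) (ne_of_gt hv0)]
    ring
  -- rpow identity
  have hrpow : (v ^ 2 + 1) ^ ((5:ℝ) / 2) = (v ^ 2 + 1) ^ 2 * Real.sqrt (v ^ 2 + 1) := by
    rw [show ((5:ℝ) / 2) = ((2:ℕ) : ℝ) + (1 / 2 : ℝ) by norm_num, Real.rpow_add hpos,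
      Real.rpow_natCast, ← Real.sqrt_eq_rpow]
  rw [Finv, gfun, hlog, hsq, hrpow]
  have hA : Real.arsinh (1 / v) = Real.arsinh (1 / v) := rfl
  have hpi : π ≠ 0 := Real.pi_ne_zero
  field_simp
  ring

lemma g_lb (t : ℝ) (h0 : 0 < t) (h1 : t ≤ 1) : 16 / 3 - 17 * t ^ 2 ≤ gfun t := by
  have hpos : (0:ℝ) < t ^ 2 + 1 := by positivity
  set s := Real.sqrt (t ^ 2 + 1) with hsdef
  set A := Real.arsinh t with hAdef
  have hs2 : s ^ 2 = t ^ 2 + 1 := Real.sq_sqrt hpos.le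
  have hs0 : 0 < s := Real.sqrt_pos.2 hpos
  have hs1 : 1 ≤ s := by
    rw [hsdef, show t ^ 2 + 1 = 1 + t ^ 2 by ring]
    rw [Real.le_sqrt zero_le_one (by positivity)]
    nlinarith
  have hsub : s ≤ 1 + t ^ 2 / 2 := by
    have := my_sqrt_ub (t ^ 2) (sq_nonneg t)
    rw [hsdef, show t ^ 2 + 1 = 1 + t ^ 2 by ring]
    exact this
  have hslb : 1 + t ^ 2 / 2 - t ^ 4 / 8 ≤ s := by
    have := my_sqrt_lb (t ^ 2) (sq_nonneg t) (by nlinarith)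
    rw [hsdef, show t ^ 2 + 1 = 1 + t ^ 2 by ring]
    calc 1 + t ^ 2 / 2 - t ^ 4 / 8 = 1 + t ^ 2 / 2 - (t ^ 2) ^ 2 / 8 := by ring
      _ ≤ _ := this
  have hAlb : t - t ^ 3 / 6 ≤ A := my_arsinh_lb t h0.le h1
  have hAub : A ≤ t - t ^ 3 / 6 + t ^ 5 / 8 := my_arsinh_ub t h0.le h1
  have e1 : gfun t = (t * s * (2 * t ^ 2 - 1) + (1 + 4 * t ^ 2) * A) / (t ^ 3 * s ^ 5) := by
    rw [gfun, ← hAdef, ← hsdef, ← hs2]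
    field_simp
  have hNlb : 16 / 3 * t ^ 3 - t ^ 5 ≤ t * s * (2 * t ^ 2 - 1) + (1 + 4 * t ^ 2) * A := by
    nlinarith [mul_le_mul_of_nonneg_left hslb (by positivity : (0:ℝ) ≤ 2 * t ^ 3),
      mul_le_mul_of_nonneg_left hsub h0.le,
      mul_le_mul_of_nonneg_left hAlb (by positivity : (0:ℝ) ≤ 1 + 4 * t ^ 2),
      pow_le_pow_of_le_one h0.le h1 (show 5 ≤ 7 by norm_num)]
  have hNpos : (0:ℝ) ≤ 16 / 3 * t ^ 3 - t ^ 5 := by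
    nlinarith [pow_le_pow_of_le_one h0.le h1 (show 3 ≤ 5 by norm_num)]
  have hs5ub : s ^ 5 ≤ (t ^ 2 + 1) ^ 3 := by
    calc s ^ 5 ≤ s ^ 6 := pow_le_pow_right₀ hs1 (by norm_num)
      _ = (s ^ 2) ^ 3 := by ring
      _ = (t ^ 2 + 1) ^ 3 := by rw [hs2]
  have step1 : (16 / 3 * t ^ 3 - t ^ 5) / (t ^ 3 * (t ^ 2 + 1) ^ 3) ≤ gfun t := by
    rw [e1]
    gcongr
    exact le_trans hNpos hNlb
  refine le_trans ?_ step1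
  rw [le_div_iff₀ (by positivity)]
  nlinarith [pow_pos h0 3, pow_pos h0 5, pow_pos h0 7, pow_pos h0 9,
    pow_le_pow_of_le_one h0.le h1 (show 3 ≤ 5 by norm_num),
    pow_le_pow_of_le_one h0.le h1 (show 5 ≤ 7 by norm_num),
    pow_le_pow_of_le_one h0.le h1 (show 7 ≤ 9 by norm_num)]

lemma g_ub (t : ℝ) (h0 : 0 < t) (h1 : t ≤ 1) : gfun t ≤ 16 / 3 + 2 * t ^ 2 := by
  have hpos : (0:ℝ) < t ^ 2 + 1 := by positivity
  set s := Real.sqrt (t ^ 2 + 1) with hsdef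
  set A := Real.arsinh t with hAdef
  have hs2 : s ^ 2 = t ^ 2 + 1 := Real.sq_sqrt hpos.le
  have hs0 : 0 < s := Real.sqrt_pos.2 hpos
  have hs1 : 1 ≤ s := by
    rw [hsdef, show t ^ 2 + 1 = 1 + t ^ 2 by ring]
    rw [Real.le_sqrt zero_le_one (by positivity)]
    nlinarith
  have hsub : s ≤ 1 + t ^ 2 / 2 := by
    have := my_sqrt_ub (t ^ 2) (sq_nonneg t)
    rw [hsdef, show t ^ 2 + 1 = 1 + t ^ 2 by ring]
    exact this
  have hslb : 1 + t ^ 2 / 2 - t ^ 4 / 8 ≤ s := by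
    have := my_sqrt_lb (t ^ 2) (sq_nonneg t) (by nlinarith)
    rw [hsdef, show t ^ 2 + 1 = 1 + t ^ 2 by ring]
    calc 1 + t ^ 2 / 2 - t ^ 4 / 8 = 1 + t ^ 2 / 2 - (t ^ 2) ^ 2 / 8 := by ring
      _ ≤ _ := this
  have hAlb : t - t ^ 3 / 6 ≤ A := my_arsinh_lb t h0.le h1
  have hAub : A ≤ t - t ^ 3 / 6 + t ^ 5 / 8 := my_arsinh_ub t h0.le h1
  have e1 : gfun t = (t * s * (2 * t ^ 2 - 1) + (1 + 4 * t ^ 2) * A) / (t ^ 3 * s ^ 5) := by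
    rw [gfun, ← hAdef, ← hsdef, ← hs2]
    field_simp
  have hNub : t * s * (2 * t ^ 2 - 1) + (1 + 4 * t ^ 2) * A ≤ 16 / 3 * t ^ 3 + 2 * t ^ 5 := by
    nlinarith [mul_le_mul_of_nonneg_left hsub (by positivity : (0:ℝ) ≤ 2 * t ^ 3),
      mul_le_mul_of_nonneg_left hslb h0.le,
      mul_le_mul_of_nonneg_left hAub (by positivity : (0:ℝ) ≤ 1 + 4 * t ^ 2),
      pow_le_pow_of_le_one h0.le h1 (show 5 ≤ 7 by norm_num)]
  have hNlb : 16 / 3 * t ^ 3 - t ^ 5 ≤ t * s * (2 * t ^ 2 - 1) + (1 + 4 * t ^ 2) * A := by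
    nlinarith [mul_le_mul_of_nonneg_left hslb (by positivity : (0:ℝ) ≤ 2 * t ^ 3),
      mul_le_mul_of_nonneg_left hsub h0.le,
      mul_le_mul_of_nonneg_left hAlb (by positivity : (0:ℝ) ≤ 1 + 4 * t ^ 2),
      pow_le_pow_of_le_one h0.le h1 (show 5 ≤ 7 by norm_num)]
  have hNpos : (0:ℝ) ≤ t * s * (2 * t ^ 2 - 1) + (1 + 4 * t ^ 2) * A := by
    refine le_trans ?_ hNlb
    nlinarith [pow_le_pow_of_le_one h0.le h1 (show 3 ≤ 5 by norm_num)]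
  have hs5 : 1 ≤ s ^ 5 := one_le_pow₀ hs1
  have step1 : gfun t ≤ (16 / 3 * t ^ 3 + 2 * t ^ 5) / t ^ 3 := by
    rw [e1]
    calc (t * s * (2 * t ^ 2 - 1) + (1 + 4 * t ^ 2) * A) / (t ^ 3 * s ^ 5)
        ≤ (t * s * (2 * t ^ 2 - 1) + (1 + 4 * t ^ 2) * A) / t ^ 3 := by
          gcongr
          nlinarith [pow_pos h0 3, hs5]
      _ ≤ (16 / 3 * t ^ 3 + 2 * t ^ 5) / t ^ 3 := by gcongr ?_ / _
  refine le_trans step1 ?_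
  rw [div_le_iff₀ (by positivity)]
  ring_nf
  nlinarith [pow_pos h0 3]

/-- `v⁴ · F(v) → 16/(3π)` as `v → ∞`; in particular `F` decays like `v⁻⁴`. -/
theorem stmt2 :
    Filter.Tendsto (fun v : ℝ => v ^ 4 * Finv v) Filter.atTop (nhds (16 / (3 * π))) := by
  have hg : Filter.Tendsto gfun (nhdsWithin 0 (Set.Ioi 0)) (nhds (16 / 3)) := by
    have hlo : Filter.Tendsto (fun t : ℝ => 16 / 3 - 17 * t ^ 2) (nhdsWithin 0 (Set.Ioi 0))
        (nhds (16 / 3)) := by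
      have hc : Continuous fun t : ℝ => 16 / 3 - 17 * t ^ 2 := by continuity
      have h := (hc.tendsto 0).mono_left (nhdsWithin_le_nhds (s := Set.Ioi 0))
      norm_num at h
      exact h
    have hhi : Filter.Tendsto (fun t : ℝ => 16 / 3 + 2 * t ^ 2) (nhdsWithin 0 (Set.Ioi 0))
        (nhds (16 / 3)) := by
      have hc : Continuous fun t : ℝ => 16 / 3 + 2 * t ^ 2 := by continuity
      have h := (hc.tendsto 0).mono_left (nhdsWithin_le_nhds (s := Set.Ioi 0))
      norm_num at h
      exact h
    have hmem : Set.Ioc (0:ℝ) 1 ∈ nhdsWithin (0:ℝ) (Set.Ioi 0) :=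
      Ioc_mem_nhdsGT_of_mem ⟨le_refl 0, zero_lt_one⟩
    refine tendsto_of_tendsto_of_tendsto_of_le_of_le' hlo hhi ?_ ?_
    · filter_upwards [hmem] with t ht
      exact g_lb t ht.1 ht.2
    · filter_upwards [hmem] with t ht
      exact g_ub t ht.1 ht.2
  have hinv : Filter.Tendsto (fun v : ℝ => 1 / v) Filter.atTop (nhdsWithin 0 (Set.Ioi 0)) := by
    simpa [one_div] using tendsto_inv_atTop_nhdsGT_zero (𝕜 := ℝ)
  have h2 : Filter.Tendsto (fun v : ℝ => gfun (1 / v) / π) Filter.atTop (nhds (16 / 3 / π)) :=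
    (hg.comp hinv).div_const π
  have hcomp : (fun v : ℝ => gfun (1 / v) / π) =ᶠ[Filter.atTop] fun v : ℝ => v ^ 4 * Finv v :=
    (Filter.eventually_ge_atTop 1).mono fun v hv => (key_id v hv).symm
  rw [show (16:ℝ) / (3 * π) = 16 / 3 / π by ring]
  exact h2.congr' hcomp
end

section
/- Let F : (0,∞) → ℝ be defined by F(v) = (2 − v²)/(π(1+v²)²) − v²(v²+4)·(ln v − ln(√(v²+1)+1))/(π(v²+1)^{5/2}). Then F is Lebesgue integrable on (0,∞). -/
open Real MeasureTheory

lemma Finv_measurable : Measurable Finv := by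
  have h2 : Measurable fun v : ℝ => Real.log (Real.sqrt (v ^ 2 + 1) + 1) :=
    Real.measurable_log.comp
      ((Real.continuous_sqrt.comp (by continuity)).add continuous_const).measurable
  have h3 : Measurable fun v : ℝ => (v ^ 2 + 1) ^ ((5 : ℝ) / 2) :=
    (Continuous.rpow_const (by continuity) fun v => Or.inl (by positivity)).measurable
  unfold Finv
  exact ((measurable_const.sub (measurable_id.pow_const 2)).div
      (measurable_const.mul ((measurable_const.add (measurable_id.pow_const 2)).pow_const 2))).sub
    ((((measurable_id.pow_const 2).mul ((measurable_id.pow_const 2).add measurable_const)).mul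
      (Real.measurable_log.sub h2)).div (measurable_const.mul h3))

lemma rpow_five_halves {x : ℝ} (hx : 0 ≤ x) :
    x ^ ((5 : ℝ) / 2) = x ^ 2 * Real.sqrt x := by
  rw [show ((5 : ℝ)/2) = ((2 : ℕ) : ℝ) + (1/2 : ℝ) by norm_num,
    Real.rpow_add' hx (by norm_num), Real.rpow_natCast, Real.sqrt_eq_rpow]

lemma sqrt_le' (v : ℝ) (hv : 0 ≤ v) : Real.sqrt (v ^ 2 + 1) ≤ v + 1 := by
  rw [show v + 1 = Real.sqrt ((v+1)^2) by rw [Real.sqrt_sq (by linarith)]]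
  exact Real.sqrt_le_sqrt (by nlinarith)

lemma le_sqrt'' (v : ℝ) (hv : 0 ≤ v) : v ≤ Real.sqrt (v ^ 2 + 1) := by
  nlinarith [Real.sq_sqrt (show (0:ℝ) ≤ v^2+1 by positivity), Real.sqrt_nonneg (v^2+1)]

/-- On `(0,∞)`, `-log v ≤ 2 / √v`. -/
lemma neg_log_le' (v : ℝ) (hv : 0 < v) : -Real.log v ≤ 2 / Real.sqrt v := by
  have hs : 0 < Real.sqrt v := Real.sqrt_pos.mpr hv
  have h1 : Real.log (1 / Real.sqrt v) ≤ 1 / Real.sqrt v - 1 :=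
    Real.log_le_sub_one_of_pos (by positivity)
  have h2 : Real.log (1 / Real.sqrt v) = -(1/2) * Real.log v := by
    rw [Real.log_div one_ne_zero (ne_of_gt hs), Real.log_one, Real.log_sqrt hv.le]
    ring
  rw [h2] at h1
  have h3 : 2 / Real.sqrt v = 2 * (1 / Real.sqrt v) := by ring
  have h4 : 0 < 1 / Real.sqrt v := by positivity
  linarith

set_option maxHeartbeats 2000000 in
/-- `F` is Lebesgue integrable on `(0, ∞)`. -/
theorem stmt3 : IntegrableOn Finv (Set.Ioi 0) := by
  have hπ : (3:ℝ) ≤ π := by linarith [Real.pi_gt_three]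
  have hπ0 : (0:ℝ) < π := by linarith
  have hmeas := Finv_measurable
  have hsplit : Set.Ioi (0:ℝ) = Set.Ioc 0 1 ∪ Set.Ioi 1 := by
    ext x
    simp only [Set.mem_Ioi, Set.mem_union, Set.mem_Ioc]
    constructor
    · intro h
      rcases le_or_gt x 1 with h1 | h1
      · exact Or.inl ⟨h, h1⟩
      · exact Or.inr h1
    · rintro (⟨h, _⟩ | h) <;> linarith
  rw [hsplit]
  apply IntegrableOn.union
  · -- on (0, 1]
    have hg : IntegrableOn (fun v : ℝ => 5 + 5 * v ^ (-(1:ℝ)/2)) (Set.Ioc 0 1) := by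
      apply Integrable.add
      · exact (integrableOn_const_iff).mpr (Or.inr measure_Ioc_lt_top)
      · apply Integrable.const_mul
        have h := intervalIntegral.intervalIntegrable_rpow' (a := 0) (b := 1)
          (r := -(1:ℝ)/2) (by norm_num)
        rwa [intervalIntegrable_iff_integrableOn_Ioc_of_le zero_le_one] at h
    apply Integrable.mono' hg hmeas.aestronglyMeasurable.restrict
    rw [ae_restrict_iff' measurableSet_Ioc]
    filter_upwards with v hv
    obtain ⟨hv0, hv1⟩ := hv
    have hs : 0 < Real.sqrt v := Real.sqrt_pos.mpr hv0
    have hrpow : v ^ (-(1:ℝ)/2) = 1 / Real.sqrt v := by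
      rw [show (-(1:ℝ)/2) = -(1/2 : ℝ) by norm_num, Real.rpow_neg hv0.le,
        ← Real.sqrt_eq_rpow, one_div]
    -- bound term 1
    have hden1 : (3:ℝ) ≤ π * (1 + v^2)^2 := by nlinarith
    have ht1 : |(2 - v ^ 2) / (π * (1 + v ^ 2) ^ 2)| ≤ 2 := by
      rw [abs_div, abs_of_pos (show (0:ℝ) < π * (1 + v ^ 2) ^ 2 from by positivity)]
      calc |2 - v^2| / (π * (1+v^2)^2) ≤ 2 / 1 := by
            apply div_le_div₀ (by norm_num) ?_ one_pos (by linarith)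
            rw [abs_le]; constructor <;> nlinarith
        _ = 2 := by norm_num
    -- bound term 2
    have hS : 0 < Real.sqrt (v^2+1) := Real.sqrt_pos.mpr (by positivity)
    have hS2 : Real.sqrt (v^2+1) ≤ v + 1 := sqrt_le' v hv0.le
    have hlogv : Real.log v ≤ 0 := Real.log_nonpos hv0.le hv1
    have hlogS0 : 0 ≤ Real.log (Real.sqrt (v^2+1) + 1) :=
      Real.log_nonneg (by linarith)
    have hlogS : Real.log (Real.sqrt (v^2+1) + 1) ≤ 2 := by
      have := Real.log_le_sub_one_of_pos (x := Real.sqrt (v^2+1) + 1) (by linarith)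
      linarith
    have hnl := neg_log_le' v hv0
    have hDabs : |Real.log v - Real.log (Real.sqrt (v^2+1) + 1)| ≤ 2 + 2 / Real.sqrt v := by
      rw [abs_le]
      constructor <;> nlinarith [div_nonneg (by norm_num : (0:ℝ) ≤ 2) hs.le]
    have hrp1 : (1:ℝ) ≤ (v^2+1) ^ ((5:ℝ)/2) :=
      Real.one_le_rpow (by nlinarith) (by norm_num)
    have ht2 : |v ^ 2 * (v ^ 2 + 4) * (Real.log v - Real.log (Real.sqrt (v ^ 2 + 1) + 1)) /
        (π * (v ^ 2 + 1) ^ ((5 : ℝ) / 2))| ≤ 2 * (2 + 2 / Real.sqrt v) := by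
      rw [abs_div, abs_of_pos (show (0:ℝ) < π * (v ^ 2 + 1) ^ ((5:ℝ)/2) from by positivity),
        abs_mul, abs_of_nonneg (show (0:ℝ) ≤ v^2*(v^2+4) from by positivity)]
      have hnum : v^2*(v^2+4) * |Real.log v - Real.log (Real.sqrt (v^2+1) + 1)| ≤
          5 * (2 + 2 / Real.sqrt v) := by
        have hv2 : v^2 ≤ 1 := by nlinarith
        have h5 : v^2*(v^2+4) ≤ 5 := by nlinarith [sq_nonneg v, hv2]
        have habs0 : 0 ≤ |Real.log v - Real.log (Real.sqrt (v^2+1) + 1)| := abs_nonneg _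
        have h20 : (0:ℝ) ≤ 2 + 2 / Real.sqrt v := by positivity
        nlinarith [mul_le_mul h5 hDabs habs0 (by norm_num : (0:ℝ) ≤ 5),
          mul_nonneg (by positivity : (0:ℝ) ≤ v^2*(v^2+4)) habs0]
      calc v^2*(v^2+4) * |Real.log v - Real.log (Real.sqrt (v^2+1) + 1)| /
            (π * (v^2+1) ^ ((5:ℝ)/2)) ≤ (5 * (2 + 2 / Real.sqrt v)) / 3 := by
            apply div_le_div₀ (by positivity) hnum (by norm_num)
            nlinarith
        _ ≤ 2 * (2 + 2 / Real.sqrt v) := by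
            have h20 : (0:ℝ) ≤ 2 + 2 / Real.sqrt v := by positivity
            linarith
    rw [Real.norm_eq_abs]
    calc |Finv v| ≤ |(2 - v ^ 2) / (π * (1 + v ^ 2) ^ 2)| +
          |v ^ 2 * (v ^ 2 + 4) * (Real.log v - Real.log (Real.sqrt (v ^ 2 + 1) + 1)) /
            (π * (v ^ 2 + 1) ^ ((5 : ℝ) / 2))| := abs_sub _ _
      _ ≤ 2 + 2 * (2 + 2 / Real.sqrt v) := add_le_add ht1 ht2
      _ ≤ 5 + 5 * v ^ (-(1:ℝ)/2) := by
          rw [hrpow]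
          have hsv1 : Real.sqrt v ≤ 1 := Real.sqrt_le_one.mpr hv1
          have h1s : 1 ≤ 1 / Real.sqrt v := by
            rw [le_div_iff₀ hs]; linarith
          have h2s : 2 / Real.sqrt v = 2 * (1 / Real.sqrt v) := by ring
          linarith
  · -- on (1, ∞)
    have hg : IntegrableOn (fun v : ℝ => 5 * v ^ (-2:ℝ)) (Set.Ioi 1) :=
      (integrableOn_Ioi_rpow_of_lt (by norm_num) one_pos).const_mul 5
    apply Integrable.mono' hg hmeas.aestronglyMeasurable.restrict
    rw [ae_restrict_iff' measurableSet_Ioi]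
    filter_upwards with v hv
    rw [Set.mem_Ioi] at hv
    have hv0 : (0:ℝ) < v := by linarith
    have hv1 : (1:ℝ) ≤ v := hv.le
    have hrpow : v ^ (-2:ℝ) = 1 / v^2 := by
      rw [show (-2:ℝ) = -((2:ℕ):ℝ) by norm_num, Real.rpow_neg hv0.le, Real.rpow_natCast, one_div]
    have hS : 0 < Real.sqrt (v^2+1) := Real.sqrt_pos.mpr (by positivity)
    have hSle : Real.sqrt (v^2+1) ≤ v + 1 := sqrt_le' v hv0.le
    have hSge : v ≤ Real.sqrt (v^2+1) := le_sqrt'' v hv0.le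
    -- bound on the log difference
    have hD0 : Real.log v - Real.log (Real.sqrt (v^2+1) + 1) ≤ 0 := by
      have := Real.log_le_log hv0 (by linarith : v ≤ Real.sqrt (v^2+1) + 1)
      linarith
    have hD2 : -(Real.log v - Real.log (Real.sqrt (v^2+1) + 1)) ≤ 2 / v := by
      have hq : Real.log ((Real.sqrt (v^2+1) + 1) / v) ≤ (Real.sqrt (v^2+1) + 1) / v - 1 :=
        Real.log_le_sub_one_of_pos (by positivity)
      rw [Real.log_div (by linarith) (ne_of_gt hv0)] at hq
      have : (Real.sqrt (v^2+1) + 1) / v - 1 ≤ 2 / v := by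
        rw [div_sub' (ne_of_gt hv0)]
        apply div_le_div₀ (by positivity) (by linarith) hv0 le_rfl
      linarith
    have hDabs : |Real.log v - Real.log (Real.sqrt (v^2+1) + 1)| ≤ 2 / v := by
      rw [abs_of_nonpos hD0]; exact hD2
    -- term 1
    have ht1 : |(2 - v ^ 2) / (π * (1 + v ^ 2) ^ 2)| ≤ 1 / v^2 := by
      rw [abs_div, abs_of_pos (show (0:ℝ) < π * (1 + v ^ 2) ^ 2 from by positivity)]
      calc |2 - v^2| / (π * (1 + v^2)^2) ≤ 3 * v^2 / (3 * (v^2 * v^2)) := by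
            apply div_le_div₀ (by positivity) ?_ (by positivity) ?_
            · rw [abs_le]; constructor <;> nlinarith
            · nlinarith
        _ = 1 / v^2 := by field_simp
    -- term 2
    have hfh : (v^2+1) ^ ((5:ℝ)/2) = (v^2+1)^2 * Real.sqrt (v^2+1) :=
      rpow_five_halves (by positivity)
    have ht2 : |v ^ 2 * (v ^ 2 + 4) * (Real.log v - Real.log (Real.sqrt (v ^ 2 + 1) + 1)) /
        (π * (v ^ 2 + 1) ^ ((5 : ℝ) / 2))| ≤ 4 / v^2 := by
      rw [abs_div, abs_of_pos (show (0:ℝ) < π * (v ^ 2 + 1) ^ ((5:ℝ)/2) from by positivity),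
        abs_mul, abs_of_nonneg (show (0:ℝ) ≤ v^2*(v^2+4) from by positivity)]
      have hnum : v^2*(v^2+4) * |Real.log v - Real.log (Real.sqrt (v^2+1) + 1)| ≤ 10 * v^3 := by
        have hv2 : 1 ≤ v^2 := by nlinarith
        have h1 : v^2*(v^2+4) ≤ 5 * v^4 := by nlinarith [hv2, sq_nonneg v]
        have h2 : 2 / v ≤ 2 := by
          rw [div_le_iff₀ hv0]; linarith
        have habs0 : 0 ≤ |Real.log v - Real.log (Real.sqrt (v^2+1) + 1)| := abs_nonneg _
        calc v^2*(v^2+4) * |Real.log v - Real.log (Real.sqrt (v^2+1) + 1)|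
            ≤ 5 * v^4 * (2 / v) := by
              apply mul_le_mul h1 hDabs habs0 (by positivity)
          _ = 10 * v^3 := by field_simp; ring
      have hden : 3 * (v^2 * (v^2 * v)) ≤ π * (v^2+1) ^ ((5:ℝ)/2) := by
        rw [hfh]
        have h1 : v^4 ≤ (v^2+1)^2 := by nlinarith
        nlinarith [mul_le_mul h1 hSge hv0.le (by positivity : (0:ℝ) ≤ (v^2+1)^2),
          mul_nonneg (by linarith : (0:ℝ) ≤ π - 3)
            (mul_nonneg (by positivity : (0:ℝ) ≤ (v^2+1)^2) hS.le)]
      calc v^2*(v^2+4) * |Real.log v - Real.log (Real.sqrt (v^2+1) + 1)| /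
            (π * (v^2+1) ^ ((5:ℝ)/2)) ≤ 10 * v^3 / (3 * (v^2 * (v^2 * v))) := by
            apply div_le_div₀ (by positivity) hnum (by positivity) hden
        _ ≤ 4 / v^2 := by
            rw [div_le_div_iff₀ (by positivity) (by positivity)]
            nlinarith [pow_pos hv0 5]
    rw [Real.norm_eq_abs]
    calc |Finv v| ≤ |(2 - v ^ 2) / (π * (1 + v ^ 2) ^ 2)| +
          |v ^ 2 * (v ^ 2 + 4) * (Real.log v - Real.log (Real.sqrt (v ^ 2 + 1) + 1)) /
            (π * (v ^ 2 + 1) ^ ((5 : ℝ) / 2))| := abs_sub _ _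
      _ ≤ 1 / v^2 + 4 / v^2 := add_le_add ht1 ht2
      _ = 5 * v ^ (-2:ℝ) := by rw [hrpow]; ring
end
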